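/- If z ∈ D is such that the map t ↦ h(t,z) has only isolated zeros in [0,T], then f_δ(z) → f(z) as δ → 0⁺. -/

import Mathlib

open Set Filter

/-- If the map `t ↦ h(t,z)` has only isolated zeros in `[0,T]`, then the regularized averaged
function `f_δ(z) = ∫₀ᵀ (F1(t,z) + φ(h(t,z)/δ) • F2(t,z)) dt` converges, as `δ → 0⁺`, to the
averaged function `f(z) = ∫₀ᵀ (F1(t,z) + sgn(h(t,z)) • F2(t,z)) dt`. -/
theorem regularized_averaged_tendsto {n : ℕ} (T : ℝ) (hT : 0 < T)
    (D : Set (EuclideanSpace ℝ (Fin n))) (hD : IsOpen D)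
    (F1 F2 : ℝ → EuclideanSpace ℝ (Fin n) → EuclideanSpace ℝ (Fin n))
    (h : ℝ → EuclideanSpace ℝ (Fin n) → ℝ)
    (hF1c : ContinuousOn (fun p : ℝ × EuclideanSpace ℝ (Fin n) => F1 p.1 p.2) (univ ×ˢ D))
    (hF2c : ContinuousOn (fun p : ℝ × EuclideanSpace ℝ (Fin n) => F2 p.1 p.2) (univ ×ˢ D))
    (hhc : ContinuousOn (fun p : ℝ × EuclideanSpace ℝ (Fin n) => h p.1 p.2) (univ ×ˢ D))
    (hF1per : ∀ t x, F1 (t + T) x = F1 t x)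
    (hF2per : ∀ t x, F2 (t + T) x = F2 t x)
    (hhper : ∀ t x, h (t + T) x = h t x)
    (φ : ℝ → ℝ)
    (hφ₁ : ∀ u : ℝ, 1 ≤ u → φ u = 1)
    (hφ₂ : ∀ u : ℝ, -1 < u → u < 1 → φ u = u)
    (hφ₃ : ∀ u : ℝ, u ≤ -1 → φ u = -1)
    (z : EuclideanSpace ℝ (Fin n)) (hz : z ∈ D)
    (hiso : ∀ t₀ ∈ {t ∈ Icc (0 : ℝ) T | h t z = 0}, ∃ η > 0,
      ∀ t ∈ {t ∈ Icc (0 : ℝ) T | h t z = 0}, |t - t₀| < η → t = t₀) :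
    Tendsto (fun δ : ℝ => ∫ t in (0 : ℝ)..T, (F1 t z + φ (h t z / δ) • F2 t z))
      (nhdsWithin 0 (Set.Ioi 0))
      (nhds (∫ t in (0 : ℝ)..T, (F1 t z + Real.sign (h t z) • F2 t z))) := by
  -- continuity of the slices
  have hmaps : ∀ t : ℝ, (t, z) ∈ (univ ×ˢ D : Set (ℝ × EuclideanSpace ℝ (Fin n))) :=
    fun t => ⟨mem_univ _, hz⟩
  have hcurve : Continuous fun t : ℝ => (t, z) := continuous_id.prodMk continuous_const
  have hcont1 : Continuous fun t => F1 t z := by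
    rw [← continuousOn_univ]
    exact hF1c.comp hcurve.continuousOn (fun t _ => hmaps t)
  have hcont2 : Continuous fun t => F2 t z := by
    rw [← continuousOn_univ]
    exact hF2c.comp hcurve.continuousOn (fun t _ => hmaps t)
  have hconth : Continuous fun t => h t z := by
    rw [← continuousOn_univ]
    exact hhc.comp hcurve.continuousOn (fun t _ => hmaps t)
  -- φ is the clamp function
  have hφeq : φ = fun u => max (-1) (min 1 u) := by
    funext u
    rcases le_or_gt 1 u with h1 | h1
    · rw [hφ₁ u h1, min_eq_left h1, max_eq_right (by norm_num : (-1 : ℝ) ≤ 1)]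
    rcases le_or_gt u (-1) with h2 | h2
    · rw [hφ₃ u h2, min_eq_right (by linarith), max_eq_left h2]
    · rw [hφ₂ u h2 h1, min_eq_right h1.le, max_eq_right h2.le]
  have hφcont : Continuous φ := by
    rw [hφeq]
    exact continuous_const.max (continuous_const.min continuous_id)
  have hφbd : ∀ u, |φ u| ≤ 1 := by
    intro u
    rw [hφeq, abs_le]
    constructor
    · exact le_max_left _ _
    · exact max_le (by norm_num) (min_le_left _ _)
  -- the zero set is finite
  set S : Set ℝ := {t ∈ Icc (0 : ℝ) T | h t z = 0} with hS
  have hSeq : S = Icc (0 : ℝ) T ∩ {t | h t z = 0} := rfl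
  have hSclosed : IsClosed S := by
    rw [hSeq]
    exact isClosed_Icc.inter (isClosed_eq hconth continuous_const)
  have hScomp : IsCompact S :=
    isCompact_Icc.of_isClosed_subset hSclosed (fun t ht => ht.1)
  have hSdisc : DiscreteTopology S := by
    rw [discreteTopology_subtype_iff]
    intro x hx
    obtain ⟨η, hη, hηx⟩ := hiso x hx
    rw [inf_principal_eq_bot]
    have hball : Metric.ball x η ∈ nhdsWithin x {x}ᶜ :=
      nhdsWithin_le_nhds (Metric.ball_mem_nhds x hη)
    filter_upwards [hball, self_mem_nhdsWithin] with t ht ht'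
    intro htS
    exact ht' (hηx t htS (by simpa [Real.dist_eq] using ht))
  have hSfin : S.Finite := hScomp.finite (isDiscrete_iff_discreteTopology.mpr hSdisc)
  have hSmeas : MeasureTheory.volume S = 0 := hSfin.measure_zero _
  -- dominated convergence
  apply intervalIntegral.tendsto_integral_filter_of_dominated_convergence
    (fun t => ‖F1 t z‖ + ‖F2 t z‖)
  · filter_upwards with δ
    exact (hcont1.add ((hφcont.comp (hconth.div_const δ)).smul hcont2)).aestronglyMeasurable
  · filter_upwards with δ
    filter_upwards with t _
    calc ‖F1 t z + φ (h t z / δ) • F2 t z‖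
        ≤ ‖F1 t z‖ + ‖φ (h t z / δ) • F2 t z‖ := norm_add_le _ _
      _ ≤ ‖F1 t z‖ + ‖F2 t z‖ := by
          gcongr
          rw [norm_smul]
          calc ‖φ (h t z / δ)‖ * ‖F2 t z‖ ≤ 1 * ‖F2 t z‖ := by
                gcongr
                exact hφbd _
            _ = ‖F2 t z‖ := one_mul _
  · exact (hcont1.norm.add hcont2.norm).intervalIntegrable 0 T
  · have hae : ∀ᵐ t : ℝ, t ∉ S := by
      rw [MeasureTheory.ae_iff]
      simpa using hSmeas
    filter_upwards [hae] with t htS htI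
    -- t ∈ Ι 0 T = Ioc 0 T, and t ∉ S, so h t z ≠ 0
    have htIcc : t ∈ Icc (0 : ℝ) T := by
      rw [uIoc_of_le hT.le] at htI
      exact ⟨htI.1.le, htI.2⟩
    have hne : h t z ≠ 0 := fun h0 => htS ⟨htIcc, h0⟩
    have habs : 0 < |h t z| := abs_pos.mpr hne
    have hev : ∀ᶠ δ : ℝ in nhdsWithin 0 (Set.Ioi 0),
        φ (h t z / δ) = Real.sign (h t z) := by
      have hmem : Set.Ioo (0 : ℝ) |h t z| ∈ nhdsWithin 0 (Set.Ioi 0) := by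
        apply mem_nhdsWithin.mpr
        exact ⟨Iio |h t z|, isOpen_Iio, habs, fun x hx => ⟨hx.2, hx.1⟩⟩
      filter_upwards [hmem] with δ hδ
      rcases lt_or_gt_of_ne hne with hneg | hpos
      · rw [Real.sign_of_neg hneg, hφ₃]
        rw [div_le_iff₀ hδ.1]
        have : δ < -h t z := by
          have := hδ.2
          rw [abs_of_neg hneg] at this
          linarith
        nlinarith [hδ.1]
      · rw [Real.sign_of_pos hpos, hφ₁]
        rw [le_div_iff₀ hδ.1]
        have : δ < h t z := by
          have := hδ.2
          rw [abs_of_pos hpos] at this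
          linarith
        linarith
    apply Tendsto.congr' _ tendsto_const_nhds
    filter_upwards [hev] with δ hδ
    rw [hδ]
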